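/- Let M be a mean on an interval I with inf I = 0 and suppose (aₙ) is a sequence in I with Σ aₙ = +∞ and M(a₁,…,aₙ)/aₙ → +∞. Then M is not a Hardy mean: for every C > 0 there exists a summable sequence (cₙ) in I with Σₙ M(c₁,…,cₙ) > C·Σₙ cₙ. -/

import Mathlib

/-- `M` is a mean on the set `I`: its value on every nonempty tuple from `I`
lies between the minimum and the maximum of the tuple. -/
def IsMeanOn (I : Set ℝ) (M : ∀ n : ℕ, (Fin n → ℝ) → ℝ) : Prop :=
  ∀ (n : ℕ) (a : Fin (n + 1) → ℝ), (∀ i, a i ∈ I) →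
    (⨅ i, a i) ≤ M (n + 1) a ∧ M (n + 1) a ≤ ⨆ i, a i

/-- `M` is (positively) homogeneous. -/
def IsHomogeneousMean (M : ∀ n : ℕ, (Fin n → ℝ) → ℝ) : Prop :=
  ∀ (t : ℝ), 0 < t → ∀ (n : ℕ) (a : Fin n → ℝ), (∀ i, 0 < a i) →
    M n (fun i => t * a i) = t * M n a

/-- `M` is monotone (nondecreasing in each variable). -/
def IsMonotoneMean (M : ∀ n : ℕ, (Fin n → ℝ) → ℝ) : Prop :=
  ∀ (n : ℕ) (a b : Fin n → ℝ), (∀ i, 0 < a i) → (∀ i, a i ≤ b i) →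
    M n a ≤ M n b

/-- `M` is repetition invariant: repeating every entry `m` times does not
change the value of the mean. -/
def IsRepetitionInvariant (M : ∀ n : ℕ, (Fin n → ℝ) → ℝ) : Prop :=
  ∀ (n m : ℕ), 0 < m → ∀ (a : Fin n → ℝ), (∀ i, 0 < a i) →
    M (n * m) (fun i => a ⟨(i : ℕ) / m, Nat.div_lt_of_lt_mul
      (lt_of_lt_of_eq i.isLt (Nat.mul_comm n m))⟩) = M n a

/-- `M` is a weak-Hardy mean on `I`: for every summable sequence in `I` the
sequence of running means is summable. -/
def IsWeakHardyMean (I : Set ℝ) (M : ∀ n : ℕ, (Fin n → ℝ) → ℝ) : Prop :=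
  ∀ a : ℕ → ℝ, (∀ n, a n ∈ I) → Summable a →
    Summable (fun n => M (n + 1) (fun k : Fin (n + 1) => a (k : ℕ)))

theorem stmt_19 (I : Set ℝ) (hne : I.Nonempty) (hIpos : I ⊆ Set.Ioi 0)
    (hInf : sInf I = 0)
    (M : ∀ n : ℕ, (Fin n → ℝ) → ℝ) (hmean : IsMeanOn I M)
    (a : ℕ → ℝ) (ha : ∀ n, a n ∈ I) (hdiv : ¬ Summable a)
    (hlim : Filter.Tendsto
      (fun n => M (n + 1) (fun k : Fin (n + 1) => a (k : ℕ)) / a n)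
      Filter.atTop Filter.atTop) :
    ∀ C : ℝ, 0 < C → ∃ c : ℕ → ℝ, (∀ n, c n ∈ I) ∧ Summable c ∧
      ∃ N : ℕ, C * ∑' n, c n <
        ∑ n ∈ Finset.range N, M (n + 1) (fun k : Fin (n + 1) => c (k : ℕ)) := by
  intro C hC
  have hapos : ∀ n, 0 < a n := fun n => hIpos (ha n)
  -- arbitrarily small elements of I
  have hsmall : ∀ j : ℕ, ∃ x ∈ I, x < (1/2 : ℝ)^j := by
    intro j
    have h2 : (0:ℝ) < (1/2)^j := by positivity
    obtain ⟨x, hx, hlt⟩ := Real.lt_sInf_add_pos hne h2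
    exact ⟨x, hx, by rwa [hInf, zero_add] at hlt⟩
  choose b hbI hbs using hsmall
  have hbpos : ∀ j, 0 < b j := fun j => hIpos (hbI j)
  -- threshold for the mean / a n ratio
  obtain ⟨n₀, hn₀⟩ := Filter.eventually_atTop.mp (hlim.eventually_ge_atTop (2*C))
  -- partial sums of a diverge
  have hS := (not_summable_iff_tendsto_nat_atTop_of_nonneg (fun n => (hapos n).le)).mp hdiv
  obtain ⟨K, hK⟩ := ((hS.eventually_gt_atTop (2 * ∑ i ∈ Finset.range n₀, a i + 2)).and
    (Filter.eventually_ge_atTop n₀)).exists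
  obtain ⟨hK1, hK2⟩ := hK
  set c : ℕ → ℝ := fun n => if h : n < K then a n else b (n - K) with hc
  have hcI : ∀ n, c n ∈ I := by
    intro n; simp only [hc]; split
    · exact ha _
    · exact hbI _
  have hcpos : ∀ n, 0 < c n := fun n => hIpos (hcI n)
  have htail : ∀ n, c (n + K) = b n := by
    intro n
    simp only [hc]
    rw [dif_neg (by omega)]
    congr 1
    omega
  have hbsum : Summable b :=
    Summable.of_nonneg_of_le (fun j => (hbpos j).le) (fun j => (hbs j).le)
      summable_geometric_two
  have hcsum : Summable c := by
    rw [← summable_nat_add_iff K]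
    simpa only [htail] using hbsum
  have htsumb : ∑' j, b j ≤ 2 := by
    calc ∑' j, b j ≤ ∑' j, (1/2:ℝ)^j :=
          Summable.tsum_le_tsum (fun j => (hbs j).le) hbsum summable_geometric_two
      _ = 2 := tsum_geometric_two
  have htsum : ∑' n, c n ≤ ∑ i ∈ Finset.range K, a i + 2 := by
    rw [← Summable.sum_add_tsum_nat_add K hcsum]
    have h1 : ∑ i ∈ Finset.range K, c i = ∑ i ∈ Finset.range K, a i :=
      Finset.sum_congr rfl (fun i hi => by
        simp only [hc]; rw [dif_pos (Finset.mem_range.mp hi)])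
    have h2 : ∑' i, c (i + K) ≤ 2 := by
      simpa only [htail] using htsumb
    linarith
  refine ⟨c, hcI, hcsum, K, ?_⟩
  have hMeq : ∀ n ∈ Finset.range K,
      M (n+1) (fun k : Fin (n+1) => c (k:ℕ)) = M (n+1) (fun k : Fin (n+1) => a (k:ℕ)) := by
    intro n hn
    congr 1
    funext k
    have hk : (k:ℕ) < K := lt_of_lt_of_le k.isLt (Nat.succ_le_of_lt (Finset.mem_range.mp hn))
    simp only [hc]
    rw [dif_pos hk]
  have hMpos : ∀ n : ℕ, 0 ≤ M (n+1) (fun k : Fin (n+1) => a (k:ℕ)) := by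
    intro n
    refine le_trans ?_ (hmean n _ (fun i => ha i)).1
    exact le_ciInf fun i => (hapos _).le
  have hlow : ∀ n, n₀ ≤ n → 2*C * a n ≤ M (n+1) (fun k : Fin (n+1) => a (k:ℕ)) := by
    intro n hn
    exact (le_div_iff₀ (hapos n)).mp (hn₀ n hn)
  have key : C * (∑ i ∈ Finset.range K, a i + 2) <
      ∑ n ∈ Finset.range K, M (n+1) (fun k : Fin (n+1) => a (k:ℕ)) := by
    have hsub : Finset.Ico n₀ K ⊆ Finset.range K := by
      rw [Finset.range_eq_Ico]
      exact Finset.Ico_subset_Ico (Nat.zero_le _) le_rfl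
    have h3 : ∑ n ∈ Finset.Ico n₀ K, (2*C * a n) ≤
        ∑ n ∈ Finset.range K, M (n+1) (fun k : Fin (n+1) => a (k:ℕ)) := by
      refine le_trans (Finset.sum_le_sum (fun n hn => hlow n (Finset.mem_Ico.mp hn).1)) ?_
      exact Finset.sum_le_sum_of_subset_of_nonneg hsub (fun n _ _ => hMpos n)
    have h4 : ∑ n ∈ Finset.Ico n₀ K, (2*C * a n) =
        2*C * (∑ i ∈ Finset.range K, a i - ∑ i ∈ Finset.range n₀, a i) := by
      rw [← Finset.mul_sum, Finset.sum_Ico_eq_sub a hK2]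
    nlinarith [h3, h4, hK1]
  calc C * ∑' n, c n ≤ C * (∑ i ∈ Finset.range K, a i + 2) := by
        exact mul_le_mul_of_nonneg_left htsum hC.le
    _ < ∑ n ∈ Finset.range K, M (n+1) (fun k : Fin (n+1) => a (k:ℕ)) := key
    _ = ∑ n ∈ Finset.range K, M (n+1) (fun k : Fin (n+1) => c (k:ℕ)) :=
        (Finset.sum_congr rfl hMeq).symm
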